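/- The denominators (n_i·t_{i+1})(n_i·t_{i+2}) are nonzero, so the symmetric matrices T_i are well defined; they satisfy n_jᵀ T_i n_j = δ_{ij} for all i, j ∈ {1,2,3}, and consequently (T₁, T₂, T₃) is a basis of 𝕊. -/

import Mathlib

open Matrix

noncomputable section

/-- `n i` is the outward unit normal on the edge `e_i = [x_{i+1}, x_{i+2}]`. -/
def IsOuterNormal (x n : Fin 3 → Fin 2 → ℝ) : Prop :=
  ∀ i : Fin 3, n i ⬝ᵥ n i = 1 ∧ n i ⬝ᵥ (x (i + 2) - x (i + 1)) = 0 ∧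
    0 < n i ⬝ᵥ (x (i + 1) - x i)

/-- The symmetric part `sym(A) = (A + Aᵀ)/2`. -/
def symPart (A : Matrix (Fin 2) (Fin 2) ℝ) : Matrix (Fin 2) (Fin 2) ℝ :=
  (1 / 2 : ℝ) • (A + Aᵀ)

/-- `T_i = sym(t_{i+1} t_{i+2}ᵀ) / ((n_i·t_{i+1})(n_i·t_{i+2}))`. -/
def TT (t n : Fin 3 → Fin 2 → ℝ) (i : Fin 3) : Matrix (Fin 2) (Fin 2) ℝ :=
  ((n i ⬝ᵥ t (i + 1)) * (n i ⬝ᵥ t (i + 2)))⁻¹ • symPart (vecMulVec (t (i + 1)) (t (i + 2)))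

/- Auxiliary material -/

lemma quad_vecMulVec (u v w : Fin 2 → ℝ) :
    w ⬝ᵥ (symPart (vecMulVec u v)).mulVec w = (w ⬝ᵥ u) * (w ⬝ᵥ v) := by
  simp [symPart, vecMulVec, mulVec, dotProduct, Fin.sum_univ_two, Matrix.transpose_apply,
    Matrix.add_apply, Matrix.smul_apply]
  ring

lemma symPart_symm (A : Matrix (Fin 2) (Fin 2) ℝ) : (symPart A)ᵀ = symPart A := by
  simp [symPart, Matrix.transpose_add, add_comm]

/-- The quadratic form `A ↦ wᵀ A w` as a linear map in `A`. -/
def qform (w : Fin 2 → ℝ) : Matrix (Fin 2) (Fin 2) ℝ →ₗ[ℝ] ℝ where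
  toFun A := w ⬝ᵥ A.mulVec w
  map_add' A B := by simp [Matrix.add_mulVec, dotProduct_add]; ring
  map_smul' c A := by simp [Matrix.smul_mulVec, dotProduct_smul]; ring

/-- The space of symmetric 2×2 real matrices. -/
def symSub : Submodule ℝ (Matrix (Fin 2) (Fin 2) ℝ) where
  carrier := {A | Aᵀ = A}
  add_mem' := by intro a b ha hb; simp_all [Matrix.transpose_add]
  zero_mem' := by simp
  smul_mem' := by intro c a ha; simp_all [Matrix.transpose_smul]

def symEquiv : symSub ≃ₗ[ℝ] (Fin 3 → ℝ) where
  toFun S := ![S.1 0 0, S.1 1 1, S.1 0 1]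
  map_add' S T := by funext j; fin_cases j <;> simp [Matrix.add_apply]
  map_smul' c S := by funext j; fin_cases j <;> simp [Matrix.smul_apply]
  invFun c := ⟨!![c 0, c 2; c 2, c 1], by
    ext i j; fin_cases i <;> fin_cases j <;> simp [Matrix.transpose_apply]⟩
  left_inv S := by
    apply Subtype.ext
    have h := congrFun (congrFun S.2 0) 1
    simp only [Matrix.transpose_apply] at h
    ext i j
    fin_cases i <;> fin_cases j <;> simp [h]
  right_inv c := by funext j; fin_cases j <;> simp

lemma finrank_symSub : Module.finrank ℝ symSub = 3 := by
  rw [symEquiv.finrank_eq]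
  simp

/-- The denominators `(n_i·t_{i+1})(n_i·t_{i+2})` are nonzero, the matrices `T_i`
satisfy `n_jᵀ T_i n_j = δ_{ij}`, and `(T₁, T₂, T₃)` is a basis of the space `𝕊`
of symmetric 2×2 matrices. -/
theorem TT_basis
    (x t n : Fin 3 → Fin 2 → ℝ)
    (hx : AffineIndependent ℝ x)
    (hn : IsOuterNormal x n)
    (ht_unit : ∀ i, t i ⬝ᵥ t i = 1)
    (ht_par : ∀ i, ∃ c : ℝ, x (i + 2) - x (i + 1) = c • t i) :
    (∀ i : Fin 3, (n i ⬝ᵥ t (i + 1)) * (n i ⬝ᵥ t (i + 2)) ≠ 0) ∧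
    (∀ i j : Fin 3, n j ⬝ᵥ (TT t n i).mulVec (n j) = if i = j then (1 : ℝ) else 0) ∧
    LinearIndependent ℝ (TT t n) ∧
    (∀ S : Matrix (Fin 2) (Fin 2) ℝ, Sᵀ = S →
      ∃ c : Fin 3 → ℝ, S = ∑ i : Fin 3, c i • TT t n i) := by
  have e1 : ∀ i : Fin 3, i + 1 + 1 = i + 2 := by decide
  have e2 : ∀ i : Fin 3, i + 1 + 2 = i := by decide
  have e3 : ∀ i : Fin 3, i + 2 + 1 = i := by decide
  have e4 : ∀ i : Fin 3, i + 2 + 2 = i + 1 := by decide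
  have hinj := hx.injective
  -- the scalars in ht_par are nonzero
  have hc0 : ∀ i : Fin 3, ∀ c : ℝ, x (i + 2) - x (i + 1) = c • t i → c ≠ 0 := by
    intro i c h hc
    rw [hc, zero_smul, sub_eq_zero] at h
    have h2 : i + 2 = i + 1 := hinj h
    have : (2 : Fin 3) = 1 := add_left_cancel h2
    exact absurd this (by decide)
  -- n i ⟂ t i
  have hnt : ∀ i : Fin 3, n i ⬝ᵥ t i = 0 := by
    intro i
    obtain ⟨c, hct⟩ := ht_par i
    have h := (hn i).2.1
    rw [hct, dotProduct_smul, smul_eq_mul] at h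
    exact (mul_eq_zero.1 h).resolve_left (hc0 i c hct)
  -- n i ⬝ t (i+2) ≠ 0
  have hd2 : ∀ i : Fin 3, n i ⬝ᵥ t (i + 2) ≠ 0 := by
    intro i
    obtain ⟨c, hct⟩ := ht_par (i + 2)
    rw [e4, e3] at hct
    have h := (hn i).2.2
    rw [hct, dotProduct_smul, smul_eq_mul] at h
    intro h0
    rw [h0, mul_zero] at h
    exact lt_irrefl 0 h
  -- n i ⬝ t (i+1) ≠ 0
  have hd1 : ∀ i : Fin 3, n i ⬝ᵥ t (i + 1) ≠ 0 := by
    intro i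
    obtain ⟨c, hct⟩ := ht_par (i + 1)
    rw [e2, e1] at hct
    have key : n i ⬝ᵥ (x i - x (i + 2)) ≠ 0 := by
      have h1 := (hn i).2.1
      have h2 := (hn i).2.2
      simp only [dotProduct_sub] at h1 h2 ⊢
      intro h; linarith
    rw [hct, dotProduct_smul, smul_eq_mul] at key
    intro h0
    exact key (by rw [h0, mul_zero])
  have hden : ∀ i : Fin 3, (n i ⬝ᵥ t (i + 1)) * (n i ⬝ᵥ t (i + 2)) ≠ 0 :=
    fun i => mul_ne_zero (hd1 i) (hd2 i)
  -- the quadratic form values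
  have hquad : ∀ i j : Fin 3, n j ⬝ᵥ (TT t n i).mulVec (n j) =
      ((n i ⬝ᵥ t (i + 1)) * (n i ⬝ᵥ t (i + 2)))⁻¹ *
        ((n j ⬝ᵥ t (i + 1)) * (n j ⬝ᵥ t (i + 2))) := by
    intro i j
    rw [TT, Matrix.smul_mulVec, dotProduct_smul, smul_eq_mul, quad_vecMulVec]
  have hdelta : ∀ i j : Fin 3, n j ⬝ᵥ (TT t n i).mulVec (n j) =
      if i = j then (1 : ℝ) else 0 := by
    intro i j
    by_cases h : i = j
    · subst h
      rw [hquad, if_pos rfl, inv_mul_cancel₀ (hden i)]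
    · rw [hquad, if_neg h]
      have dic : ∀ i j : Fin 3, i ≠ j → j = i + 1 ∨ j = i + 2 := by decide
      rcases dic i j h with h1 | h1
      · subst h1; rw [hnt (i + 1)]; ring
      · subst h1; rw [hnt (i + 2)]; ring
  -- linear independence
  have hli : LinearIndependent ℝ (TT t n) := by
    rw [Fintype.linearIndependent_iff]
    intro g hg j
    have h := congrArg (qform (n j)) hg
    rw [map_sum, map_zero] at h
    have hq : ∀ i, qform (n j) (TT t n i) = if i = j then (1 : ℝ) else 0 :=
      fun i => hdelta i j
    simp only [_root_.map_smul, smul_eq_mul, hq] at h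
    simpa [mul_ite] using h
  refine ⟨hden, hdelta, hli, ?_⟩
  -- spanning
  have hTsym : ∀ i, (TT t n i) ∈ symSub := by
    intro i
    show (TT t n i)ᵀ = TT t n i
    rw [TT, Matrix.transpose_smul, symPart_symm]
  set TT' : Fin 3 → symSub := fun i => ⟨TT t n i, hTsym i⟩ with hTT'
  have hli' : LinearIndependent ℝ TT' := by
    apply LinearIndependent.of_comp symSub.subtype
    exact hli
  have hcard : Fintype.card (Fin 3) = Module.finrank ℝ symSub := by
    rw [finrank_symSub]; simp
  set b := basisOfLinearIndependentOfCardEqFinrank hli' hcard with hb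
  intro S hS
  refine ⟨fun i => b.repr ⟨S, hS⟩ i, ?_⟩
  have hrepr := b.sum_repr ⟨S, hS⟩
  have hS2 : S = ((∑ i : Fin 3, b.repr ⟨S, hS⟩ i • b i : symSub) : Matrix (Fin 2) (Fin 2) ℝ) := by
    rw [hrepr]
  refine hS2.trans ?_
  rw [Submodule.coe_sum]
  refine Finset.sum_congr rfl (fun i _ => ?_)
  rw [Submodule.coe_smul]
  congr 1
  rw [hb, coe_basisOfLinearIndependentOfCardEqFinrank]
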